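/- Let n₁ ≥ n₂ ≥ ... ≥ n_k ≥ 1 be integers and let s ≥ 1 be an integer. For each i define d_i as the least integer d with C(d+n_i, n_i) ≥ s, and set D = max{d₁+1, ..., d_k+1}. Then for any tuple (t₁, ..., t_k) of nonnegative integers with t₁ + ... + t_k = D - 1, the product C(t₁+n₁, n₁) · C(t₂+n₂, n₂) · ... · C(t_k+n_k, n_k) is at least s. -/
import Mathlib

private lemma choose_add_add_le (a b : ℕ) :
    ∀ m : ℕ, (a + b + m).choose m ≤ (a + m).choose m * (b + m).choose m
  | 0 => by simp
  | m + 1 => by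
    have ih := choose_add_add_le a b m
    have h1 : (a + b + m + 1).choose (m + 1) * (m + 1)
        = (a + b + m + 1) * (a + b + m).choose m :=
      ((Nat.add_one_mul_choose_eq (a + b + m) m)).symm
    have h2 : (a + m + 1).choose (m + 1) * (m + 1) = (a + m + 1) * (a + m).choose m :=
      ((Nat.add_one_mul_choose_eq (a + m) m)).symm
    have h3 : (b + m + 1).choose (m + 1) * (m + 1) = (b + m + 1) * (b + m).choose m :=
      ((Nat.add_one_mul_choose_eq (b + m) m)).symm
    have hm : 0 < m + 1 := Nat.succ_pos m
    apply Nat.le_of_mul_le_mul_right _ hm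
    apply Nat.le_of_mul_le_mul_right _ hm
    have key : ((a + b + m + 1).choose (m + 1) * (m + 1)) * (m + 1)
        ≤ ((a + m + 1).choose (m + 1) * (m + 1)) * ((b + m + 1).choose (m + 1) * (m + 1)) := by
      rw [h1, h2, h3]
      calc (a + b + m + 1) * (a + b + m).choose m * (m + 1)
          ≤ (a + b + m + 1) * ((a + m).choose m * (b + m).choose m) * (m + 1) := by
            exact Nat.mul_le_mul_right _ (Nat.mul_le_mul_left _ ih)
        _ = ((a + b + m + 1) * (m + 1)) * ((a + m).choose m * (b + m).choose m) := by ring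
        _ ≤ ((a + m + 1) * (b + m + 1)) * ((a + m).choose m * (b + m).choose m) := by
            apply Nat.mul_le_mul_right
            nlinarith
        _ = (a + m + 1) * (a + m).choose m * ((b + m + 1) * (b + m).choose m) := by ring
    calc (a + b + m + 1).choose (m + 1) * (m + 1) * (m + 1)
        ≤ (a + m + 1).choose (m + 1) * (m + 1) * ((b + m + 1).choose (m + 1) * (m + 1)) := key
      _ = (a + m + 1).choose (m + 1) * (b + m + 1).choose (m + 1) * (m + 1) * (m + 1) := by ring

private lemma choose_sum_le_prod {ι : Type*} (m : ℕ) (t : ι → ℕ) (S : Finset ι) :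
    (∑ i ∈ S, t i + m).choose m ≤ ∏ i ∈ S, (t i + m).choose m := by
  induction S using Finset.cons_induction with
  | empty => simp
  | cons j S hj ih =>
    rw [Finset.sum_cons, Finset.prod_cons]
    calc (t j + ∑ i ∈ S, t i + m).choose m
        ≤ (t j + m).choose m * (∑ i ∈ S, t i + m).choose m := choose_add_add_le _ _ m
      _ ≤ (t j + m).choose m * ∏ i ∈ S, (t i + m).choose m := Nat.mul_le_mul_left _ ih

private lemma choose_add_mono (a : ℕ) {m n' : ℕ} (h : m ≤ n') :
    (a + m).choose m ≤ (a + n').choose n' := by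
  rw [Nat.add_comm a m, Nat.choose_symm_add, Nat.add_comm a n', Nat.choose_symm_add]
  exact Nat.choose_le_choose a (Nat.add_le_add_right h a)

/-- Let `n₁ ≥ ⋯ ≥ n_k ≥ 1` and `s ≥ 1`.  Let `d i` be the least `d` with
`C(d + nᵢ, nᵢ) ≥ s` and `D = max (d i + 1)`.  Then for any tuple `t` of nonnegative
integers with `∑ t i = D - 1`, we have `∏ C(tᵢ + nᵢ, nᵢ) ≥ s`. -/
theorem prod_choose_ge_of_sum_eq_D_sub_one (k s : ℕ) (hk : 1 ≤ k) (hs : 1 ≤ s)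
    (n : Fin k → ℕ) (hn : ∀ i, 1 ≤ n i) (hmono : Antitone n)
    (d : Fin k → ℕ) (hd : ∀ i, IsLeast {d' : ℕ | s ≤ (d' + n i).choose (n i)} (d i))
    (D : ℕ) (hD : IsGreatest (Set.range fun i => d i + 1) D)
    (t : Fin k → ℕ) (ht : ∑ i, t i = D - 1) :
    s ≤ ∏ i, (t i + n i).choose (n i) := by
  -- the last index has minimal n, hence maximal d
  have hk' : k - 1 < k := Nat.sub_lt hk Nat.one_pos
  set j : Fin k := ⟨k - 1, hk'⟩ with hj
  have hnj : ∀ i, n j ≤ n i := fun i => hmono (Fin.le_def.mpr (Nat.le_sub_one_of_lt i.2))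
  have hdj : ∀ i, d i ≤ d j := by
    intro i
    refine (hd i).2 ?_
    have : s ≤ (d j + n j).choose (n j) := (hd j).1
    exact le_trans this (choose_add_mono (d j) (hnj i))
  -- D = d j + 1
  have hDle : D ≤ d j + 1 := by
    obtain ⟨i, hi⟩ := hD.1
    exact hi ▸ Nat.add_le_add_right (hdj i) 1
  have hDge : d j + 1 ≤ D := hD.2 ⟨j, rfl⟩
  have hDeq : D = d j + 1 := le_antisymm hDle hDge
  have hsum : ∑ i, t i = d j := by rw [ht, hDeq]; simp
  calc s ≤ (d j + n j).choose (n j) := (hd j).1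
    _ = (∑ i, t i + n j).choose (n j) := by rw [hsum]
    _ ≤ ∏ i, (t i + n j).choose (n j) := choose_sum_le_prod (n j) t Finset.univ
    _ ≤ ∏ i, (t i + n i).choose (n i) :=
        Finset.prod_le_prod' fun i _ => choose_add_mono (t i) (hnj i)
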